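/- Fix κ₀, θ∞ ∈ ℂ and set ξ₁ = −2κ₀ and ξ₂ = θ∞ − 2κ₀. Let U ⊆ ℂ be open and let f, g : U → ℂ be differentiable functions satisfying the Okamoto PIV Hamiltonian system on U, such that f(t) ≠ 0 for all t ∈ U. Define x(t) = −i·f(t)·(f(t)g(t) − θ∞), y(t) = −i/f(t), and s(t) = 2it/3 (where i is the imaginary unit). Then for every t ∈ U: x'(t) = (2i/3)·[(3/2)(2ξ₂−ξ₁)(ξ₁−ξ₂) + (9s(t)/2)x(t) + (12ξ₂−9ξ₁)x(t)y(t) − 9x(t)²y(t)²] and y'(t) = (2i/3)·[−3/2 + 6x(t)y(t)³ + ((9ξ₁−12ξ₂)/2)y(t)² − (9/2)y(t)s(t)]; that is, (x,y) solves the van der Put–Top PIV system in the new time variable s = 2it/3. -/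

import Mathlib

open Complex

/-- Right-hand side of the `x`-equation of the van der Put–Top PIV system. -/
noncomputable def vdPT4Rx (ξ₁ ξ₂ : ℂ) (s x y : ℂ) : ℂ :=
  (3 / 2) * (2 * ξ₂ - ξ₁) * (ξ₁ - ξ₂) + (9 * s / 2) * x
    + (12 * ξ₂ - 9 * ξ₁) * x * y - 9 * x ^ 2 * y ^ 2

/-- Right-hand side of the `y`-equation of the van der Put–Top PIV system. -/
noncomputable def vdPT4Ry (ξ₁ ξ₂ : ℂ) (s x y : ℂ) : ℂ :=
  -3 / 2 + 6 * x * y ^ 3 + ((9 * ξ₁ - 12 * ξ₂) / 2) * y ^ 2 - (9 / 2) * y * s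

/-- Theorem 3.2, converse direction: the change of variables
`x = -if(fg-θ∞)`, `y = -i/f`, `s = 2it/3` maps solutions of the Okamoto PIV
Hamiltonian system to solutions of the van der Put–Top PIV system with
`ξ₁ = -2κ₀`, `ξ₂ = θ∞ - 2κ₀`. -/
theorem Okamoto_to_vdPT_PIV
    (κ₀ θinf ξ₁ ξ₂ : ℂ) (hξ₁ : ξ₁ = -2 * κ₀) (hξ₂ : ξ₂ = θinf - 2 * κ₀)
    (U : Set ℂ) (hU : IsOpen U) (f g : ℂ → ℂ)
    (hreg : ∀ t ∈ U, f t ≠ 0)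
    (hf : ∀ t ∈ U, HasDerivAt f
      (4 * f t * g t - (f t) ^ 2 - 2 * t * f t - 2 * κ₀) t)
    (hg : ∀ t ∈ U, HasDerivAt g
      (-2 * (g t) ^ 2 + (2 * f t + 2 * t) * g t - θinf) t) :
    ∀ t ∈ U,
      HasDerivAt (fun t' => -I * f t' * (f t' * g t' - θinf))
        ((2 * I / 3) * vdPT4Rx ξ₁ ξ₂ (2 * I * t / 3)
          (-I * f t * (f t * g t - θinf)) (-I / f t)) t ∧
      HasDerivAt (fun t' => -I / f t')
        ((2 * I / 3) * vdPT4Ry ξ₁ ξ₂ (2 * I * t / 3)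
          (-I * f t * (f t * g t - θinf)) (-I / f t)) t := by
  intro t ht
  have hft := hreg t ht
  have hf' := hf t ht
  have hg' := hg t ht
  have h3 : (I : ℂ) ^ 3 = -I := by
    simp [pow_succ, Complex.I_mul_I]
  have h5 : (I : ℂ) ^ 5 = I := by
    simp [pow_succ, Complex.I_mul_I]
  set F := 4 * f t * g t - (f t) ^ 2 - 2 * t * f t - 2 * κ₀ with hF
  set G := -2 * (g t) ^ 2 + (2 * f t + 2 * t) * g t - θinf with hG
  constructor
  · have h1 : HasDerivAt (fun t' => -I * f t' * (f t' * g t' - θinf))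
        (-I * F * (f t * g t - θinf) + -I * f t * (F * g t + f t * G)) t := by
      have := ((hf'.const_mul (-I)).mul ((hf'.mul hg').sub_const θinf))
      convert this using 1
      · rfl
      · rfl
      · rfl
      · rfl
    convert h1 using 1
    simp only [vdPT4Rx, hξ₁, hξ₂, hF, hG]
    field_simp
    ring_nf
    simp only [Complex.I_sq, Complex.I_pow_four]
    ring
  · have h1 : HasDerivAt (fun t' => -I / f t') (I * F / (f t) ^ 2) t := by
      have := (hasDerivAt_const t (-I)).div hf' hft
      convert this using 1
      · rfl
      · rfl
      · rfl
      · ring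
    convert h1 using 1
    simp only [vdPT4Ry, hξ₁, hξ₂, hF, hG]
    field_simp
    ring_nf
    simp only [Complex.I_sq, Complex.I_pow_four]
    have h6 : (f t) ^ 6 * ((f t)⁻¹) ^ 6 = 1 := by
      field_simp
    ring
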